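/- arXiv:2102.06296 — 3 statements merged into one kernel-verified Lean document; each statement's English description precedes it below -/
import Mathlib

section
/- Let x₁,…,x_t ∈ ℝⁿ with ‖x_s‖ ≤ 1 for all s, λ > 0, and V = λI + Σ_{s=1}^{t} x_s x_sᵀ. Then for any subset of indices S ⊆ {1,…,t}, the operator norm of V⁻¹ (Σ_{s∈S} x_s x_sᵀ) is at most (1/√λ) Σ_{s∈S} ‖x_s‖_{V⁻¹}, where ‖x‖_{V⁻¹} = √(xᵀV⁻¹x). -/
open Matrix Finset

noncomputable def enorm5 {n : ℕ} (v : Fin n → ℝ) : ℝ := Real.sqrt (v ⬝ᵥ v)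

lemma enorm5_nonneg {n : ℕ} (v : Fin n → ℝ) : 0 ≤ enorm5 v := Real.sqrt_nonneg _

lemma dot_self_nonneg {n : ℕ} (v : Fin n → ℝ) : 0 ≤ v ⬝ᵥ v :=
  Finset.sum_nonneg fun i _ => mul_self_nonneg _

lemma enorm5_eq_norm {n : ℕ} (v : Fin n → ℝ) :
    enorm5 v = ‖(WithLp.equiv 2 (Fin n → ℝ)).symm v‖ := by
  rw [EuclideanSpace.norm_eq]
  unfold enorm5 dotProduct
  congr 1
  apply Finset.sum_congr rfl
  intro i _
  simp [Real.norm_eq_abs, sq_abs, pow_two]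

lemma sum_vecMulVec_mulVec {n t : ℕ} (S : Finset (Fin t)) (a : Fin t → Fin n → ℝ)
    (z : Fin n → ℝ) :
    (∑ s ∈ S, vecMulVec (a s) (a s)) *ᵥ z = ∑ s ∈ S, (a s ⬝ᵥ z) • a s := by
  ext i
  simp only [mulVec, dotProduct, vecMulVec, Finset.sum_apply, Matrix.sum_apply,
    Matrix.of_apply, Pi.smul_apply, smul_eq_mul, Finset.sum_mul, Finset.mul_sum]
  rw [Finset.sum_comm]
  exact Finset.sum_congr rfl fun s _ => Finset.sum_congr rfl fun j _ => by ring

-- Cauchy-Schwarz for dot products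
lemma abs_dot_le {n : ℕ} (a b : Fin n → ℝ) : |a ⬝ᵥ b| ≤ enorm5 a * enorm5 b := by
  have key : ∀ c d : Fin n → ℝ, c ⬝ᵥ d ≤ enorm5 c * enorm5 d := by
    intro c d
    have := Real.sum_mul_le_sqrt_mul_sqrt Finset.univ c d
    unfold enorm5 dotProduct
    simpa [pow_two] using this
  rcases abs_cases (a ⬝ᵥ b) with ⟨h, _⟩ | ⟨h, _⟩
  · rw [h]; exact key a b
  · rw [h]
    have := key a (-b)
    have hnb : enorm5 (-b) = enorm5 b := by
      unfold enorm5 dotProduct; simp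
    simpa [hnb] using this

theorem stmt_5 {n t : ℕ} (x : Fin t → Fin n → ℝ) (hx : ∀ s, enorm5 (x s) ≤ 1)
    (l : ℝ) (hl : 0 < l)
    (V : Matrix (Fin n) (Fin n) ℝ)
    (hV : V = l • (1 : Matrix (Fin n) (Fin n) ℝ) + ∑ s, vecMulVec (x s) (x s))
    (S : Finset (Fin t)) :
    ∀ z : Fin n → ℝ,
      enorm5 ((V⁻¹ * ∑ s ∈ S, vecMulVec (x s) (x s)) *ᵥ z) ≤
        ((1 / Real.sqrt l) * ∑ s ∈ S, Real.sqrt (x s ⬝ᵥ (V⁻¹ *ᵥ x s))) * enorm5 z := by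
  intro z
  -- quadratic form
  have hquad : ∀ w : Fin n → ℝ, w ⬝ᵥ (V *ᵥ w) = l * (w ⬝ᵥ w) + ∑ s, (x s ⬝ᵥ w) * (x s ⬝ᵥ w) := by
    intro w
    rw [hV, add_mulVec, smul_mulVec, one_mulVec,
      sum_vecMulVec_mulVec Finset.univ x w, dotProduct_add, dotProduct_smul]
    congr 1
    simp only [dotProduct, Finset.sum_apply, Pi.smul_apply, smul_eq_mul, Finset.mul_sum]
    rw [Finset.sum_comm]
    exact Finset.sum_congr rfl fun s _ => Finset.sum_congr rfl fun i _ => by ring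
  -- V is positive definite
  have hVpd : V.PosDef := by
    refine Matrix.PosDef.of_dotProduct_mulVec_pos ?_ ?_
    · rw [hV]
      ext i j
      simp [Matrix.add_apply, Matrix.sum_apply, vecMulVec, Matrix.one_apply, mul_comm]
      rcases eq_or_ne i j with h | h
      · simp [h]
      · simp [h, Ne.symm h]
    · intro w hw
      have h1 : (0:ℝ) < w ⬝ᵥ w := by
        rcases lt_or_eq_of_le (dot_self_nonneg w) with h | h
        · exact h
        · exact absurd (dotProduct_self_eq_zero.mp h.symm) hw
      have h2 : (0:ℝ) ≤ ∑ s, (x s ⬝ᵥ w) * (x s ⬝ᵥ w) :=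
        Finset.sum_nonneg fun s _ => mul_self_nonneg _
      simpa [hquad w] using add_pos_of_pos_of_nonneg (mul_pos hl h1) h2
  have hVu : IsUnit V.det := isUnit_iff_isUnit_det V |>.mp hVpd.isUnit
  have hVinv : V * V⁻¹ = 1 := Matrix.mul_nonsing_inv V hVu
  -- per-index bound
  set w : Fin t → Fin n → ℝ := fun s => V⁻¹ *ᵥ x s with hw
  have hVw : ∀ s, V *ᵥ w s = x s := by
    intro s
    rw [hw]; simp [mulVec_mulVec, hVinv]
  have hq : ∀ s, l * (w s ⬝ᵥ w s) ≤ x s ⬝ᵥ w s := by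
    intro s
    have := hquad (w s)
    rw [hVw s, dotProduct_comm] at this
    nlinarith [Finset.sum_nonneg (fun s' (_ : s' ∈ Finset.univ) => mul_self_nonneg (x s' ⬝ᵥ w s))]
  have hqnn : ∀ s, 0 ≤ x s ⬝ᵥ w s := fun s =>
    le_trans (mul_nonneg hl.le (dot_self_nonneg _)) (hq s)
  have hwnorm : ∀ s, enorm5 (w s) ≤ (1 / Real.sqrt l) * Real.sqrt (x s ⬝ᵥ w s) := by
    intro s
    have h1 : w s ⬝ᵥ w s ≤ (x s ⬝ᵥ w s) / l := by
      rw [le_div_iff₀ hl]; linarith [hq s]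
    calc enorm5 (w s) ≤ Real.sqrt ((x s ⬝ᵥ w s) / l) := Real.sqrt_le_sqrt h1
      _ = (1 / Real.sqrt l) * Real.sqrt (x s ⬝ᵥ w s) := by
          rw [Real.sqrt_div (hqnn s), div_eq_mul_inv, one_div, mul_comm]
  -- rewrite LHS
  have hLHS : (V⁻¹ * ∑ s ∈ S, vecMulVec (x s) (x s)) *ᵥ z = ∑ s ∈ S, (x s ⬝ᵥ z) • w s := by
    rw [← mulVec_mulVec, sum_vecMulVec_mulVec]
    rw [← Matrix.mulVecLin_apply, map_sum]
    exact Finset.sum_congr rfl fun s _ => by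
      simp [Matrix.mulVecLin_apply, mulVec_smul, hw]
  rw [hLHS]
  have htri : enorm5 (∑ s ∈ S, (x s ⬝ᵥ z) • w s) ≤ ∑ s ∈ S, |x s ⬝ᵥ z| * enorm5 (w s) := by
    rw [enorm5_eq_norm]
    have heq : (WithLp.equiv 2 (Fin n → ℝ)).symm (∑ s ∈ S, (x s ⬝ᵥ z) • w s) =
        ∑ s ∈ S, (x s ⬝ᵥ z) • (WithLp.equiv 2 (Fin n → ℝ)).symm (w s) := by
        ext i; simp [Finset.sum_apply]
    rw [heq]
    refine le_trans (norm_sum_le _ _) (le_of_eq ?_)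
    exact Finset.sum_congr rfl fun s _ => by
      rw [norm_smul, Real.norm_eq_abs, ← enorm5_eq_norm]
  refine htri.trans ?_
  have hterm : ∀ s ∈ S, |x s ⬝ᵥ z| * enorm5 (w s) ≤
      enorm5 z * ((1 / Real.sqrt l) * Real.sqrt (x s ⬝ᵥ w s)) := by
    intro s _
    have h1 : |x s ⬝ᵥ z| ≤ enorm5 z := by
      refine (abs_dot_le (x s) z).trans ?_
      calc enorm5 (x s) * enorm5 z ≤ 1 * enorm5 z :=
            mul_le_mul_of_nonneg_right (hx s) (enorm5_nonneg z)
        _ = enorm5 z := one_mul _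
    exact mul_le_mul h1 (hwnorm s) (enorm5_nonneg _) (enorm5_nonneg _)
  refine (Finset.sum_le_sum hterm).trans (le_of_eq ?_)
  rw [← Finset.mul_sum, ← Finset.mul_sum]
  rw [hw]
  ring
end

section
/- Let φ(x_{t₀}),…,φ(x_{t−1}) ∈ ℝⁿ with ‖φ(x_s)‖ ≤ 1, λ > 0, V = λI + Σ_{s=t₀}^{t−1} φ(x_s)φ(x_s)ᵀ, and let θ_{t₀},…,θ_t ∈ ℝⁿ. Suppose C > 0 is such that ‖V⁻¹ Σ_{s=t₀}^{p} φ(x_s)φ(x_s)ᵀ‖_op ≤ C for every t₀ ≤ p ≤ t−1. Then for every x with ‖x‖ ≤ 1, |xᵀ V⁻¹ Σ_{s=t₀}^{t−1} φ(x_s)φ(x_s)ᵀ(θ_s − θ_t)| ≤ C · Σ_{p=t₀}^{t−1} ‖θ_p − θ_{p+1}‖. -/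
open Matrix Finset

noncomputable def enorm8 {n : ℕ} (v : Fin n → ℝ) : ℝ := Real.sqrt (v ⬝ᵥ v)

lemma enorm8_nonneg {n : ℕ} (v : Fin n → ℝ) : 0 ≤ enorm8 v := Real.sqrt_nonneg _

lemma cs8 {n : ℕ} (x y : Fin n → ℝ) : |x ⬝ᵥ y| ≤ enorm8 x * enorm8 y := by
  have h := abs_real_inner_le_norm ((WithLp.equiv 2 (Fin n → ℝ)).symm x)
      ((WithLp.equiv 2 (Fin n → ℝ)).symm y)
  simpa [enorm8, dotProduct, EuclideanSpace.norm_eq, PiLp.inner_apply, RCLike.inner_apply,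
    Real.norm_eq_abs, sq_abs, pow_two, mul_comm] using h

lemma tele8 {n : ℕ} (f : ℕ → Fin n → ℝ) (a b : ℕ) (h : a ≤ b + 1) :
    ∑ p ∈ Finset.Icc a b, (f p - f (p + 1)) = f a - f (b + 1) := by
  induction b with
  | zero =>
    interval_cases a <;> simp
  | succ b ih =>
    rcases Nat.lt_or_ge a (b + 2) with hlt | hge
    · rw [Finset.sum_Icc_succ_top (by omega), ih (by omega)]
      abel
    · have : Finset.Icc a (b + 1) = ∅ := by
        rw [Finset.Icc_eq_empty_iff]; omega
      have ha : a = b + 2 := by omega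
      simp [this, ha]

lemma dot_sum8 {n : ℕ} {ι : Type*} (x : Fin n → ℝ) (s : Finset ι) (f : ι → Fin n → ℝ) :
    x ⬝ᵥ (∑ i ∈ s, f i) = ∑ i ∈ s, x ⬝ᵥ f i := by
  simp [dotProduct, Finset.sum_apply, Finset.mul_sum]
  rw [Finset.sum_comm]

lemma mulVec_sum8 {n : ℕ} {ι : Type*} (A : Matrix (Fin n) (Fin n) ℝ) (s : Finset ι)
    (f : ι → Fin n → ℝ) : A *ᵥ (∑ i ∈ s, f i) = ∑ i ∈ s, A *ᵥ f i := by
  exact map_sum A.mulVecLin f s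

lemma sum_mulVec8 {n : ℕ} {ι : Type*} (A : ι → Matrix (Fin n) (Fin n) ℝ) (s : Finset ι)
    (v : Fin n → ℝ) : (∑ i ∈ s, A i) *ᵥ v = ∑ i ∈ s, A i *ᵥ v := by
  ext j
  simp [Matrix.mulVec, dotProduct, Finset.sum_apply, Matrix.sum_apply, Finset.sum_mul]
  rw [Finset.sum_comm]

theorem stmt_8 {n : ℕ} (t₀ t : ℕ) (h1 : 1 ≤ t₀) (h2 : t₀ ≤ t - 1)
    (φ : ℕ → Fin n → ℝ) (hφ : ∀ s, enorm8 (φ s) ≤ 1)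
    (l : ℝ) (hl : 0 < l)
    (V : Matrix (Fin n) (Fin n) ℝ)
    (hV : V = l • (1 : Matrix (Fin n) (Fin n) ℝ) +
      ∑ s ∈ Finset.Icc t₀ (t - 1), vecMulVec (φ s) (φ s))
    (θ : ℕ → Fin n → ℝ)
    (C : ℝ) (hC : 0 < C)
    (hop : ∀ p ∈ Finset.Icc t₀ (t - 1), ∀ z : Fin n → ℝ,
      enorm8 ((V⁻¹ * ∑ s ∈ Finset.Icc t₀ p, vecMulVec (φ s) (φ s)) *ᵥ z) ≤ C * enorm8 z) :
    ∀ x : Fin n → ℝ, enorm8 x ≤ 1 →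
      |x ⬝ᵥ (V⁻¹ *ᵥ (∑ s ∈ Finset.Icc t₀ (t - 1), vecMulVec (φ s) (φ s) *ᵥ (θ s - θ t)))| ≤
        C * ∑ p ∈ Finset.Icc t₀ (t - 1), enorm8 (θ p - θ (p + 1)) := by
  intro x hx
  have ht : t - 1 + 1 = t := by omega
  set T := t - 1 with hT
  -- rewrite the inner sum via telescoping and swap
  have key : ∑ s ∈ Finset.Icc t₀ T, vecMulVec (φ s) (φ s) *ᵥ (θ s - θ t)
      = ∑ p ∈ Finset.Icc t₀ T,
          (∑ s ∈ Finset.Icc t₀ p, vecMulVec (φ s) (φ s)) *ᵥ (θ p - θ (p + 1)) := by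
    have step1 : ∀ s ∈ Finset.Icc t₀ T, vecMulVec (φ s) (φ s) *ᵥ (θ s - θ t)
        = ∑ p ∈ Finset.Icc s T, vecMulVec (φ s) (φ s) *ᵥ (θ p - θ (p + 1)) := by
      intro s hs
      rw [← mulVec_sum8 _ _ _, tele8 θ s T (by simp at hs; omega), ht]
    rw [Finset.sum_congr rfl step1]
    rw [Finset.sum_comm' (s' := fun p => Finset.Icc t₀ p) (t' := Finset.Icc t₀ T)
      (by intro s p; simp only [Finset.mem_Icc]; omega)]
    refine Finset.sum_congr rfl fun p hp => ?_
    rw [sum_mulVec8 _ _ _]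
  rw [key, mulVec_sum8 _ _ _, dot_sum8 _ _ _]
  calc |∑ p ∈ Finset.Icc t₀ T, x ⬝ᵥ V⁻¹ *ᵥ ((∑ s ∈ Finset.Icc t₀ p, vecMulVec (φ s) (φ s)) *ᵥ (θ p - θ (p + 1)))|
      ≤ ∑ p ∈ Finset.Icc t₀ T, |x ⬝ᵥ V⁻¹ *ᵥ ((∑ s ∈ Finset.Icc t₀ p, vecMulVec (φ s) (φ s)) *ᵥ (θ p - θ (p + 1)))| :=
        Finset.abs_sum_le_sum_abs _ _
    _ ≤ ∑ p ∈ Finset.Icc t₀ T, C * enorm8 (θ p - θ (p + 1)) := by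
        refine Finset.sum_le_sum fun p hp => ?_
        have h1' := cs8 x (V⁻¹ *ᵥ ((∑ s ∈ Finset.Icc t₀ p, vecMulVec (φ s) (φ s)) *ᵥ (θ p - θ (p + 1))))
        have h2' := hop p hp (θ p - θ (p + 1))
        rw [← Matrix.mulVec_mulVec] at h2'
        calc |x ⬝ᵥ V⁻¹ *ᵥ ((∑ s ∈ Finset.Icc t₀ p, vecMulVec (φ s) (φ s)) *ᵥ (θ p - θ (p + 1)))|
            ≤ enorm8 x * enorm8 (V⁻¹ *ᵥ ((∑ s ∈ Finset.Icc t₀ p, vecMulVec (φ s) (φ s)) *ᵥ (θ p - θ (p + 1)))) := h1'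
          _ ≤ 1 * (C * enorm8 (θ p - θ (p + 1))) := by
              apply mul_le_mul hx h2' (enorm8_nonneg _)
              norm_num
          _ = C * enorm8 (θ p - θ (p + 1)) := one_mul _
    _ = C * ∑ p ∈ Finset.Icc t₀ T, enorm8 (θ p - θ (p + 1)) := by rw [Finset.mul_sum]
end

section
/- Let x₁,…,x_H ∈ ℝⁿ with ‖x_s‖ ≤ 1, λ ≥ 1, and V_s = λI + Σ_{u=1}^{s} x_u x_uᵀ. Then Σ_{s=1}^{H} min(1, x_sᵀ V_{s−1}⁻¹ x_s) ≤ 2 ln det(I + (1/λ) Σ_{s=1}^{H} x_s x_sᵀ). -/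
open Matrix Finset

noncomputable def enorm15 {n : ℕ} (v : Fin n → ℝ) : ℝ := Real.sqrt (v ⬝ᵥ v)

lemma min_le_two_log15 {u : ℝ} (hu : 0 ≤ u) : min 1 u ≤ 2 * Real.log (1 + u) := by
  have hpos : 0 < 1 + u := by linarith
  have h := Real.log_le_sub_one_of_pos (inv_pos.mpr hpos)
  rw [Real.log_inv] at h
  have hinv : (1 + u) * (1 + u)⁻¹ = 1 := mul_inv_cancel₀ hpos.ne'
  have key : min 1 u ≤ 2 * (1 - (1 + u)⁻¹) := by
    rcases le_total u 1 with hc | hc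
    · rw [min_eq_right hc]; nlinarith
    · rw [min_eq_left hc]; nlinarith
  linarith

lemma det_add_vecMulVec15 {n : ℕ} {A : Matrix (Fin n) (Fin n) ℝ} (hA : IsUnit A.det)
    (u : Fin n → ℝ) :
    (A + vecMulVec u u).det = A.det * (1 + u ⬝ᵥ (A⁻¹ *ᵥ u)) := by
  rw [vecMulVec_eq Unit, Matrix.det_add_replicateCol_mul_replicateRow hA]
  congr 1
  rw [Matrix.det_unique, Matrix.mul_assoc, ← Matrix.replicateCol_mulVec]
  simp [Matrix.replicateRow_mul_replicateCol_apply]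

theorem stmt_15 {n : ℕ} (H : ℕ) (x : ℕ → Fin n → ℝ) (hx : ∀ s, enorm15 (x s) ≤ 1)
    (l : ℝ) (hl : 1 ≤ l)
    (V : ℕ → Matrix (Fin n) (Fin n) ℝ)
    (hV : ∀ s, V s = l • (1 : Matrix (Fin n) (Fin n) ℝ) +
      ∑ u ∈ Finset.Icc 1 s, vecMulVec (x u) (x u)) :
    ∑ s ∈ Finset.Icc 1 H, min 1 (x s ⬝ᵥ ((V (s - 1))⁻¹ *ᵥ x s)) ≤
      2 * Real.log
        ((1 : Matrix (Fin n) (Fin n) ℝ)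
          + (1 / l) • ∑ s ∈ Finset.Icc 1 H, vecMulVec (x s) (x s)).det := by
  have hl0 : (0:ℝ) < l := lt_of_lt_of_le one_pos hl
  have hSpsd : ∀ s, Matrix.PosSemidef (∑ u ∈ Finset.Icc 1 s, vecMulVec (x u) (x u)) := by
    intro s
    refine Finset.sum_induction _ _ (fun a b ha hb => ha.add hb) Matrix.PosSemidef.zero ?_
    intro u _
    rw [vecMulVec_eq Unit]
    simpa [Matrix.conjTranspose, Matrix.replicateRow, Matrix.replicateCol, Matrix.transpose,
      Matrix.map, starRingEnd_apply, star_trivial] using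
      Matrix.posSemidef_self_mul_conjTranspose (Matrix.replicateCol Unit (x u))
  have hIpos : Matrix.PosDef (l • (1 : Matrix (Fin n) (Fin n) ℝ)) := by
    refine Matrix.posDef_iff_dotProduct_mulVec.mpr ⟨?_, ?_⟩
    · simp [Matrix.IsHermitian]
    · intro v hv
      have h0 : 0 < v ⬝ᵥ v := by
        rcases lt_or_eq_of_le (dotProduct_star_self_nonneg v) with h | h
        · simpa using h
        · exact absurd (dotProduct_star_self_eq_zero.mp (by simpa using h.symm)) hv
      simpa [Matrix.smul_mulVec, dotProduct_smul] using mul_pos hl0 h0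
  have hVpos : ∀ s, (V s).PosDef := by
    intro s; rw [hV s]; exact hIpos.add_posSemidef (hSpsd s)
  set q : ℕ → ℝ := fun s => x s ⬝ᵥ ((V (s - 1))⁻¹ *ᵥ x s) with hqdef
  have hq0 : ∀ s, 0 ≤ q s := by
    intro s
    have := ((hVpos (s - 1)).inv.posSemidef).dotProduct_mulVec_nonneg (x s)
    simpa using this
  have hstep : ∀ k, (V (k + 1)).det = (V k).det * (1 + q (k + 1)) := by
    intro k
    have hVk1 : V (k + 1) = V k + vecMulVec (x (k + 1)) (x (k + 1)) := by
      rw [hV, hV, Finset.sum_Icc_succ_top (Nat.one_le_iff_ne_zero.mpr (Nat.succ_ne_zero k)),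
        add_assoc]
    rw [hVk1, det_add_vecMulVec15 (hVpos k).det_pos.ne'.isUnit]
    rfl
  have htel : ∀ K, Real.log ((V K).det) =
      Real.log ((V 0).det) + ∑ s ∈ Finset.Icc 1 K, Real.log (1 + q s) := by
    intro K
    induction K with
    | zero => simp
    | succ k ih =>
      have h1 : (0:ℝ) < 1 + q (k + 1) := by have := hq0 (k + 1); linarith
      rw [Finset.sum_Icc_succ_top (by omega : 1 ≤ k + 1), hstep k,
        Real.log_mul (hVpos k).det_pos.ne' h1.ne', ih]
      ring
  have hdet0 : (V 0).det = l ^ n := by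
    rw [hV, Finset.Icc_eq_empty (by omega)]
    simp [Matrix.det_smul]
  set D := ((1 : Matrix (Fin n) (Fin n) ℝ)
      + (1 / l) • ∑ s ∈ Finset.Icc 1 H, vecMulVec (x s) (x s)).det with hDdef
  have hVH : (V H).det = l ^ n * D := by
    have hVeq : V H = l • ((1 : Matrix (Fin n) (Fin n) ℝ)
        + (1 / l) • ∑ s ∈ Finset.Icc 1 H, vecMulVec (x s) (x s)) := by
      rw [hV, smul_add, smul_smul, mul_one_div, div_self hl0.ne', one_smul]
    rw [hVeq, Matrix.det_smul]
    simp [hDdef]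
  have hln : (0:ℝ) < l ^ n := pow_pos hl0 n
  have hD : 0 < D := by
    have h1 := (hVpos H).det_pos
    rw [hVH] at h1
    by_contra h
    push_neg at h
    nlinarith
  have hsum : ∑ s ∈ Finset.Icc 1 H, Real.log (1 + q s) = Real.log D := by
    have h2 := htel H
    rw [hVH, hdet0, Real.log_mul hln.ne' hD.ne'] at h2
    linarith
  calc ∑ s ∈ Finset.Icc 1 H, min 1 (q s)
      ≤ ∑ s ∈ Finset.Icc 1 H, 2 * Real.log (1 + q s) :=
        Finset.sum_le_sum fun s _ => min_le_two_log15 (hq0 s)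
    _ = 2 * ∑ s ∈ Finset.Icc 1 H, Real.log (1 + q s) := by rw [Finset.mul_sum]
    _ = 2 * Real.log D := by rw [hsum]
end
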